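/- For every n ≥ 1, the symmetrization operator on K_n satisfies the decomposition P^{(n)}_{q₊,q₋} = (id ⊗ P^{(n−1)}_{q₊,q₋} ⊗ id) ∘ R^{(n)}_{q₊,q₋}, where R^{(n)}_{q₊,q₋} = id + q₋·J_n⁻ + q₊·J_n⁺ with J_n⁺ = Σ_{j ∈ [±(n−1)]} (j n)(−j −n) and J_n⁻ = (−n n) acting on K_n by permuting tensor factors, and id ⊗ P^{(n−1)}_{q₊,q₋} ⊗ id denotes P^{(n−1)}_{q₊,q₋} acting on the tensor factors indexed by [±(n−1)] with the identity on the factors indexed by −n and n. -/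

import Mathlib

open scoped ComplexOrder

noncomputable section

namespace TypeB

/-- The nontrivial orbits (cycles) of a permutation. -/
def ntOrbits {X : Type*} (σ : Equiv.Perm X) : Set (Set X) :=
  {O | ∃ i : X, σ i ≠ i ∧ O = {j | σ.SameCycle i j}}

def negSet (B : Set ℤ) : Set ℤ := (fun x : ℤ => -x) '' B

def negOrbits (σ : Equiv.Perm ℤ) : Set (Set ℤ) := {O ∈ ntOrbits σ | negSet O = O}

def posOrbits (σ : Equiv.Perm ℤ) : Set (Set ℤ) := {O ∈ ntOrbits σ | negSet O ≠ O}

def expPlus (σ : Equiv.Perm ℤ) : ℕ :=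
  (∑ᶠ O ∈ posOrbits σ, (O.ncard - 1)) / 2 + ∑ᶠ O ∈ negOrbits σ, (O.ncard / 2 - 1)

def negCount (σ : Equiv.Perm ℤ) : ℕ := (negOrbits σ).ncard

def phi (qp qm : ℂ) (σ : Equiv.Perm ℤ) : ℂ := qp ^ expPlus σ * qm ^ negCount σ

def Bset (n : ℕ) : Set (Equiv.Perm ℤ) :=
  {σ | (∀ i : ℤ, σ (-i) = -σ i) ∧ ∀ i : ℤ, (n : ℤ) < |i| → σ i = i}

/-- The classification set of parameters (Theorem 1.1). -/
def ClassSet (qp qm : ℂ) : Prop :=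
  (∃ (M N : ℕ) (ε : ℤ), (ε = 1 ∨ ε = -1) ∧ M + N ≠ 0 ∧
      qp = (ε : ℂ) / ((M : ℂ) + (N : ℂ)) ∧
      qm = ((M : ℂ) - (N : ℂ)) / ((M : ℂ) + (N : ℂ))) ∨
  (qp = 0 ∧ ∃ r : ℝ, qm = (r : ℂ) ∧ -1 ≤ r ∧ r ≤ 1)

/-- The index set [±n] of the 2n tensor factors of K_n. -/
abbrev SIdx (n : ℕ) := {i : ℤ // i ≠ 0 ∧ |i| ≤ (n : ℤ)}

instance (n : ℕ) : Fintype (SIdx n) :=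
  Fintype.subtype ((Finset.Icc (-(n : ℤ)) (n : ℤ)).erase 0)
    (by intro x; simp [Finset.mem_erase, Finset.mem_Icc, abs_le])

/-- H: the complexification of the real Hilbert space with orthonormal basis α. -/
abbrev Hsp (α : Type*) := α →₀ ℂ

/-- K_n = H^{⊗2n}, with basis indexed by functions [±n] → α. -/
abbrev Ksp (α : Type*) (n : ℕ) := (SIdx n → α) →₀ ℂ

/-- The inner product of H (antilinear on the left). -/
def innerH {α : Type*} (x y : Hsp α) : ℂ :=
  y.sum fun a c => (starRingEnd ℂ) (x a) * c

/-- The free inner product ⟨·,·⟩₀,₀ on K_n (antilinear on the left); on simple tensors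
it is the product of the inner products of the factors. -/
def inner00 {α : Type*} {n : ℕ} (F G : Ksp α n) : ℂ :=
  F.sum fun v c => (starRingEnd ℂ) c * G v

open Classical in
/-- The restriction of σ : Perm ℤ to [±n] (junk value 1 if σ does not preserve [±n];
elements of B(n) do preserve it). -/
def permRestrict (n : ℕ) (σ : Equiv.Perm ℤ) : Equiv.Perm (SIdx n) :=
  if h : ∀ i : ℤ, (i ≠ 0 ∧ |i| ≤ (n : ℤ)) ↔ (σ i ≠ 0 ∧ |σ i| ≤ (n : ℤ)) then
    Equiv.Perm.subtypePerm σ (fun i => (h i).symm) else 1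

/-- The action of σ ∈ B(n) on K_n permuting the tensor factors:
x_{−n}⊗…⊗x_n ↦ x_{σ(−n)}⊗…⊗x_{σ(n)}. -/
def act (α : Type*) [DecidableEq α] (n : ℕ) (σ : Equiv.Perm ℤ) :
    Ksp α n →ₗ[ℂ] Ksp α n :=
  Finsupp.lmapDomain ℂ ℂ (fun v : SIdx n → α => v ∘ (permRestrict n σ))

/-- The type-B symmetrization operator P^{(n)}_{q₊,q₋} = Σ_{σ∈B(n)} φ_{q₊,q₋}(σ)·σ. -/
def Pop (α : Type*) [DecidableEq α] (n : ℕ) (qp qm : ℂ) : Ksp α n →ₗ[ℂ] Ksp α n :=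
  ∑ᶠ σ ∈ Bset n, phi qp qm σ • act α n σ

/-- The deformed (semi-)inner product ⟨ξ,η⟩_{q₊,q₋} = ⟨ξ, P^{(n)} η⟩₀,₀ on K_n. -/
def innerQ (α : Type*) [DecidableEq α] (n : ℕ) (qp qm : ℂ) (F G : Ksp α n) : ℂ :=
  inner00 F (Pop α n qp qm G)

/-- R^{(n)}_{q₊,q₋} = id + q₋·J_n⁻ + q₊·J_n⁺. -/
def Rop (α : Type*) [DecidableEq α] (n : ℕ) (qp qm : ℂ) : Ksp α n →ₗ[ℂ] Ksp α n :=
  LinearMap.id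
    + qm • act α n (Equiv.swap (-(n : ℤ)) (n : ℤ))
    + qp • ∑ j ∈ (Finset.Icc (-(n : ℤ) + 1) ((n : ℤ) - 1)).erase 0,
        act α n (Equiv.swap j (n : ℤ) * Equiv.swap (-j) (-(n : ℤ)))

/-- The inclusion [±n] ⊆ [±(n+1)]. -/
def castIdx {n : ℕ} (i : SIdx n) : SIdx (n + 1) :=
  ⟨i.1, i.2.1, i.2.2.trans (by push_cast; omega)⟩

/-- The position −(n+1) in [±(n+1)]. -/
def negEnd (n : ℕ) : SIdx (n + 1) :=
  ⟨-((n : ℤ) + 1), by refine ⟨by omega, ?_⟩; rw [abs_le]; constructor <;> omega⟩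

/-- The position n+1 in [±(n+1)]. -/
def posEnd (n : ℕ) : SIdx (n + 1) :=
  ⟨(n : ℤ) + 1, by refine ⟨by omega, ?_⟩; rw [abs_le]; constructor <;> omega⟩

/-- Restriction of a basis index of K_{n+1} to the middle factors [±n]. -/
def downFn {α : Type*} {n : ℕ} (v : SIdx (n + 1) → α) : SIdx n → α :=
  fun i => v (castIdx i)

open Classical in
/-- Extension of a basis index of K_n by values a at position −(n+1) and b at n+1. -/
def upFn {α : Type*} {n : ℕ} (w : SIdx n → α) (a b : α) : SIdx (n + 1) → α :=
  fun i => if h : i.1 ≠ 0 ∧ |i.1| ≤ (n : ℤ) then w ⟨i.1, h⟩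
           else if i.1 < 0 then a else b

/-- id ⊗ T ⊗ id: the operator T on K_n acting on the middle 2n tensor factors of
K_{n+1}, with the identity on the factors at positions −(n+1) and n+1. -/
def embedMid (α : Type*) [DecidableEq α] (n : ℕ) (T : Ksp α n →ₗ[ℂ] Ksp α n) :
    Ksp α (n + 1) →ₗ[ℂ] Ksp α (n + 1) :=
  Finsupp.lsum ℂ fun v : SIdx (n + 1) → α =>
    LinearMap.toSpanSingleton ℂ _
      (Finsupp.mapDomain (fun w : SIdx n → α => upFn w (v (negEnd n)) (v (posEnd n)))
        (T (Finsupp.single (downFn v) 1)))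

/-- The left-right creation operator b*(x⊗y) : K_n → K_{n+1}: it tensors x at the
leftmost position −(n+1) and y at the rightmost position n+1. -/
def bstar (α : Type*) [DecidableEq α] (n : ℕ) (x y : Hsp α) :
    Ksp α n →ₗ[ℂ] Ksp α (n + 1) :=
  Finsupp.lsum ℂ fun w : SIdx n → α =>
    LinearMap.toSpanSingleton ℂ _
      (x.sum fun a xa => y.sum fun b yb => Finsupp.single (upFn w a b) (xa * yb))

/-- The free annihilation operator b(x⊗y) : K_{n+1} → K_n, the ⟨·,·⟩₀,₀-adjoint of
b*(x⊗y):  x_{−(n+1)}⊗…⊗x_{n+1} ↦ ⟨x,x_{−(n+1)}⟩⟨y,x_{n+1}⟩·x_{−n}⊗…⊗x_n. -/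
def bfree (α : Type*) [DecidableEq α] (n : ℕ) (x y : Hsp α) :
    Ksp α (n + 1) →ₗ[ℂ] Ksp α n :=
  Finsupp.lsum ℂ fun v : SIdx (n + 1) → α =>
    LinearMap.toSpanSingleton ℂ _
      (((starRingEnd ℂ) (x (v (negEnd n))) * (starRingEnd ℂ) (y (v (posEnd n)))) •
        Finsupp.single (downFn v) (1 : ℂ))



section Aux

open Equiv Equiv.Perm

variable {X : Type*}

/-- If `R` is an equivalence relation such that `R x (σ x)` for all `x`, then
`SameCycle σ` implies `R`. -/
theorem sameCycle_closure {σ : Equiv.Perm X} {R : X → X → Prop}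
    (hR : Equivalence R) (hstep : ∀ x, R x (σ x)) :
    ∀ x y, σ.SameCycle x y → R x y := by
  have hpow : ∀ (k : ℕ) (x : X), R x ((σ ^ k) x) := by
    intro k
    induction k with
    | zero => intro x; simpa using hR.refl x
    | succ k ih =>
      intro x
      have h1 : R ((σ ^ k) x) (σ ((σ ^ k) x)) := hstep _
      have : (σ ^ (k+1)) x = σ ((σ ^ k) x) := by
        rw [pow_succ', Equiv.Perm.mul_apply]
      rw [this]
      exact hR.trans (ih x) h1
  rintro x y ⟨k, hk⟩
  rcases le_or_gt 0 k with hk0 | hk0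
  · lift k to ℕ using hk0
    rw [zpow_natCast] at hk
    subst hk; exact hpow k x
  · have : (0:ℤ) ≤ -k := by omega
    lift (-k) to ℕ using this with a ha
    have : (σ ^ a) y = x := by
      have : (σ ^ (-k) : Equiv.Perm X) y = x := by
        rw [← hk]; simp [zpow_neg]
      rwa [← ha, zpow_natCast] at this
    subst this
    exact hR.symm (hpow a y)

section Insertion

variable {f : Equiv.Perm X} {p a : X} [DecidableEq X]

theorem insert_apply (f : Equiv.Perm X) (x : X) :
    (Equiv.swap a p * f) x = Equiv.swap a p (f x) := rfl

theorem insert_fix (hp : f p = p) (hap : a ≠ p) (x : X) :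
    (Equiv.swap a p * f) x = x ↔ f x = x ∧ x ≠ a ∧ x ≠ p := by
  constructor
  · intro h
    rw [insert_apply] at h
    rcases eq_or_ne (f x) a with h1 | h1
    · rw [h1, Equiv.swap_apply_left] at h
      subst h
      rw [hp] at h1
      exact absurd h1.symm hap
    rcases eq_or_ne (f x) p with h2 | h2
    · have hx : x = p := f.injective (by rw [h2, hp])
      subst hx
      rw [h2, Equiv.swap_apply_right] at h
      exact absurd h hap
    · rw [Equiv.swap_apply_of_ne_of_ne h1 h2] at h
      refine ⟨h, ?_, ?_⟩
      · rintro rfl; exact h1 h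
      · rintro rfl; exact h2 h
  · rintro ⟨h1, h2, h3⟩
    rw [insert_apply, h1, Equiv.swap_apply_of_ne_of_ne h2 h3]

theorem insert_sameCycle (hp : f p = p) (hap : a ≠ p) (x y : X) :
    (Equiv.swap a p * f).SameCycle x y ↔
      f.SameCycle x y ∨
        ((f.SameCycle a x ∨ x = p) ∧ (f.SameCycle a y ∨ y = p)) := by
  set g := Equiv.swap a p * f with hg
  have hga : g p = a := by rw [hg, insert_apply, hp, Equiv.swap_apply_right]
  have hSCpa : g.SameCycle p a := ⟨1, by simpa using hga⟩
  have hfwd : ∀ x y, f.SameCycle x y → g.SameCycle x y := by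
    refine sameCycle_closure ((Equiv.Perm.SameCycle.equivalence g)) ?_
    intro x
    rcases eq_or_ne (f x) a with h1 | h1
    · -- g x = p, g p = a = f x
      have hgx : g x = p := by rw [hg, insert_apply, h1, Equiv.swap_apply_left]
      refine ⟨2, ?_⟩
      have : (g ^ (2:ℤ)) x = g (g x) := by
        rw [show (2:ℤ) = 1 + 1 by norm_num, zpow_add, zpow_one, Equiv.Perm.mul_apply]
      rw [this, hgx, hga, h1]
    rcases eq_or_ne (f x) p with h2 | h2
    · have hx : x = p := f.injective (by rw [h2, hp])
      subst hx
      rw [h2]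
    · exact ⟨1, by simp [hg, insert_apply, Equiv.swap_apply_of_ne_of_ne h1 h2]⟩
  have haux : ∀ z, (f.SameCycle a z ∨ z = p) → g.SameCycle a z := by
    rintro z (h | rfl)
    · exact hfwd _ _ h
    · exact hSCpa.symm
  constructor
  · refine sameCycle_closure (σ := g) (R := fun x y => f.SameCycle x y ∨ ((f.SameCycle a x ∨ x = p) ∧ (f.SameCycle a y ∨ y = p))) ?_ ?_ x y
    · constructor
      · intro x; exact Or.inl (Equiv.Perm.SameCycle.refl f x)
      · intro x y h
        rcases h with h | ⟨h1, h2⟩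
        · exact Or.inl h.symm
        · exact Or.inr ⟨h2, h1⟩
      · intro x y z hxy' hyz'
        rcases hxy' with hxy | ⟨h1, h2⟩ <;> rcases hyz' with hyz | ⟨h3, h4⟩
        · exact Or.inl (hxy.trans hyz)
        · -- x~y, and (a~y ∨ y=p)
          rcases h3 with h3 | hy
          · exact Or.inr ⟨Or.inl (h3.trans hxy.symm), h4⟩
          · have : x = p := (hy ▸ hxy).eq_of_right hp
            exact Or.inr ⟨Or.inr this, h4⟩
        · rcases h2 with h2 | hy
          · exact Or.inr ⟨h1, Or.inl (h2.trans hyz)⟩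
          · have : z = p := ((hy ▸ hyz).symm).eq_of_right hp
            exact Or.inr ⟨h1, Or.inr this⟩
        · exact Or.inr ⟨h1, h4⟩
    · intro x
      rcases eq_or_ne (f x) a with h1 | h1
      · have hgx : g x = p := by rw [hg, insert_apply, h1, Equiv.swap_apply_left]
        rw [hgx]
        have hax : f.SameCycle a x := (Equiv.Perm.SameCycle.symm ⟨1, by simpa using h1⟩)
        exact Or.inr ⟨Or.inl hax, Or.inr rfl⟩
      rcases eq_or_ne (f x) p with h2 | h2
      · have hx : x = p := f.injective (by rw [h2, hp])
        subst hx
        rw [hg, insert_apply, hp, Equiv.swap_apply_right]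
        exact Or.inr ⟨Or.inr rfl, Or.inl (Equiv.Perm.SameCycle.refl f a)⟩
      · have : g x = f x := by rw [hg, insert_apply, Equiv.swap_apply_of_ne_of_ne h1 h2]
        rw [this]
        exact Or.inl ⟨1, by simp⟩
  · rintro (h | ⟨h1, h2⟩)
    · exact hfwd _ _ h
    · exact ((haux _ h1).symm).trans (haux _ h2)

end Insertion



-- orbit of i
def orb (f : Equiv.Perm ℤ) (i : ℤ) : Set ℤ := {x | f.SameCycle i x}



theorem mem_orb_self (f : Equiv.Perm ℤ) (i : ℤ) : i ∈ orb f i :=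
  Equiv.Perm.SameCycle.refl f i

theorem mem_orb {f : Equiv.Perm ℤ} {i x : ℤ} : x ∈ orb f i ↔ f.SameCycle i x := Iff.rfl

theorem apply_mem_orb (f : Equiv.Perm ℤ) (i : ℤ) : f i ∈ orb f i := ⟨1, by simp⟩

theorem orb_eq {f : Equiv.Perm ℤ} {i k : ℤ} (h : f.SameCycle i k) : orb f i = orb f k := by
  ext x; exact ⟨fun hx => h.symm.trans hx, fun hx => h.trans hx⟩

theorem sc_of_fixed {f : Equiv.Perm ℤ} {p x : ℤ} (hp : f p = p) :
    f.SameCycle p x ↔ x = p := by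
  constructor
  · intro h; exact (h.eq_of_left hp).symm
  · intro hx; rw [hx]

theorem apply_ne_of_mem_orb {f : Equiv.Perm ℤ} {i x : ℤ} (hi : f i ≠ i)
    (hx : x ∈ orb f i) : f x ≠ x := fun h => hi ((hx.apply_eq_self_iff).2 h)

theorem orb_mem_ntOrbits {f : Equiv.Perm ℤ} {i : ℤ} (hi : f i ≠ i) :
    orb f i ∈ ntOrbits f := ⟨i, hi, rfl⟩

theorem mem_ntOrbits {f : Equiv.Perm ℤ} {O : Set ℤ} :
    O ∈ ntOrbits f ↔ ∃ i, f i ≠ i ∧ O = orb f i := Iff.rfl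

theorem mem_negSet {B : Set ℤ} {x : ℤ} : x ∈ negSet B ↔ -x ∈ B := by
  constructor
  · rintro ⟨y, hy, rfl⟩; simpa using hy
  · intro h; exact ⟨-x, h, by simp⟩

section BsetFacts

variable {m : ℕ} {σ' : Equiv.Perm ℤ}

theorem Bset_apply_neg (h : σ' ∈ Bset m) (i : ℤ) : σ' (-i) = -σ' i := h.1 i

theorem Bset_fix (h : σ' ∈ Bset m) {i : ℤ} (hi : (m:ℤ) < |i|) : σ' i = i := h.2 i hi

theorem Bset_moved_abs (h : σ' ∈ Bset m) {x : ℤ} (hx : σ' x ≠ x) : |x| ≤ (m:ℤ) := by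
  by_contra hc; exact hx (h.2 x (by omega))

theorem Bset_moved_finite (h : σ' ∈ Bset m) : {x : ℤ | σ' x ≠ x}.Finite := by
  apply (Set.finite_Icc (-(m:ℤ)) m).subset
  intro x hx
  have := abs_le.mp (Bset_moved_abs h hx)
  simp only [Set.mem_Icc]; omega

theorem Bset_sc_neg (h : σ' ∈ Bset m) {x y : ℤ} (hxy : σ'.SameCycle x y) :
    σ'.SameCycle (-x) (-y) := by
  refine sameCycle_closure (R := fun x y => σ'.SameCycle (-x) (-y)) ?_ ?_ x y hxy
  · exact ⟨fun x => Equiv.Perm.SameCycle.refl _ _, fun h => h.symm, fun h1 h2 => h1.trans h2⟩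
  · intro x
    have : σ' (-x) = -σ' x := h.1 x
    exact ⟨1, by simp [this]⟩

theorem Bset_sc_neg_iff (h : σ' ∈ Bset m) {x y : ℤ} :
    σ'.SameCycle (-x) (-y) ↔ σ'.SameCycle x y := by
  constructor
  · intro hh; simpa using Bset_sc_neg h hh
  · exact Bset_sc_neg h

theorem negSet_orb (h : σ' ∈ Bset m) (i : ℤ) : negSet (orb σ' i) = orb σ' (-i) := by
  ext x
  rw [mem_negSet, mem_orb, mem_orb]
  constructor
  · intro hh; simpa using Bset_sc_neg h hh
  · intro hh; simpa using Bset_sc_neg h hh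

theorem orb_finite (h : σ' ∈ Bset m) {i : ℤ} (hi : σ' i ≠ i) : (orb σ' i).Finite :=
  (Bset_moved_finite h).subset (fun _ hx => apply_ne_of_mem_orb hi hx)

theorem orb_ncard_ge_two (h : σ' ∈ Bset m) {i : ℤ} (hi : σ' i ≠ i) :
    2 ≤ (orb σ' i).ncard := by
  have h2 : ({i, σ' i} : Set ℤ) ⊆ orb σ' i := by
    rintro x (rfl | rfl)
    · exact mem_orb_self _ _
    · exact apply_mem_orb _ _
  calc 2 = ({i, σ' i} : Set ℤ).ncard := (Set.ncard_pair (Ne.symm hi)).symm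
    _ ≤ _ := Set.ncard_le_ncard h2 (orb_finite h hi)

theorem ntOrbits_finite (h : σ' ∈ Bset m) : (ntOrbits σ').Finite := by
  apply (Bset_moved_finite h).finite_subsets.subset
  rintro O ⟨i, hi, rfl⟩
  intro x hx
  exact apply_ne_of_mem_orb hi hx

theorem not_mem_orbit_of_fixed (h : σ' ∈ Bset m) {O : Set ℤ} (hO : O ∈ ntOrbits σ')
    {x : ℤ} (hx : σ' x = x) : x ∉ O := by
  rcases hO with ⟨i, hi, rfl⟩
  intro hmem
  exact apply_ne_of_mem_orb hi hmem hx

theorem Bset_zero (h : σ' ∈ Bset m) : σ' 0 = 0 := by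
  have := h.1 0; simp at this; omega

theorem Bset_mul {τ : Equiv.Perm ℤ} (h1 : σ' ∈ Bset m) (h2 : τ ∈ Bset m) :
    σ' * τ ∈ Bset m := by
  constructor
  · intro i
    simp only [Equiv.Perm.mul_apply, h2.1 i, h1.1 (τ i)]
  · intro i hi
    simp only [Equiv.Perm.mul_apply, h2.2 i hi, h1.2 i hi]

theorem Bset_mono {n : ℕ} (hmn : m ≤ n) : Bset m ⊆ Bset n := by
  rintro σ ⟨h1, h2⟩
  exact ⟨h1, fun i hi => h2 i (by omega)⟩

end BsetFacts



section PhiLemmas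

variable {m : ℕ} {σ' : Equiv.Perm ℤ} {qp qm : ℂ}

theorem Bset_fix_n (h : σ' ∈ Bset m) : σ' ((m:ℤ)+1) = (m:ℤ)+1 :=
  Bset_fix h (by rw [abs_of_nonneg (by positivity)]; omega)

theorem Bset_fix_negn (h : σ' ∈ Bset m) : σ' (-((m:ℤ)+1)) = -((m:ℤ)+1) := by
  rw [Bset_apply_neg h, Bset_fix_n h]

theorem orb_fixed {f : Equiv.Perm ℤ} {p : ℤ} (hp : f p = p) : orb f p = {p} := by
  ext x; rw [mem_orb, sc_of_fixed hp]; rfl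

theorem trivial_orb_not_mem {i : ℤ} (h : σ' ∈ Bset m) (hi : σ' i = i) :
    orb σ' i ∉ ntOrbits σ' := fun hmem =>
  not_mem_orbit_of_fixed h hmem hi (mem_orb_self _ _)

theorem negOrbits_finite (h : σ' ∈ Bset m) : (negOrbits σ').Finite :=
  (ntOrbits_finite h).subset (Set.sep_subset _ _)

theorem posOrbits_finite (h : σ' ∈ Bset m) : (posOrbits σ').Finite :=
  (ntOrbits_finite h).subset (Set.sep_subset _ _)

theorem phi_Jminus (hσ' : σ' ∈ Bset m) :
    phi qp qm (Equiv.swap (-((m:ℤ)+1)) ((m:ℤ)+1) * σ') = qm * phi qp qm σ' := by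
  set n : ℤ := (m:ℤ)+1 with hn
  have hnm : (m:ℤ) < n := by omega
  have hfn : σ' n = n := Bset_fix_n hσ'
  have hfnn : σ' (-n) = -n := Bset_fix_negn hσ'
  have hne : -n ≠ n := by omega
  set σ : Equiv.Perm ℤ := Equiv.swap (-n) n * σ' with hσ
  -- fixed points
  have hfix : ∀ x, σ x = x ↔ σ' x = x ∧ x ≠ -n ∧ x ≠ n := fun x => insert_fix hfn hne x
  -- same cycle characterization
  have hsc : ∀ x y, σ.SameCycle x y ↔
      σ'.SameCycle x y ∨ ((x = -n ∨ x = n) ∧ (y = -n ∨ y = n)) := by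
    intro x y
    rw [insert_sameCycle hfn hne]
    rw [sc_of_fixed hfnn, sc_of_fixed hfnn]
  -- the new orbit
  have horbn : orb σ n = {-n, n} := by
    ext x
    rw [mem_orb, hsc]
    rw [sc_of_fixed hfn]
    constructor
    · rintro (rfl | ⟨h1, h2⟩)
      · exact Or.inr rfl
      · rcases h2 with h2 | h2
        · exact Or.inl h2
        · exact Or.inr h2
    · rintro (h | h)
      · exact Or.inr ⟨Or.inr rfl, Or.inl h⟩
      · exact Or.inl h
  have hσn : σ n ≠ n := fun h => ((hfix n).1 h).2.2 rfl
  -- orbits of elements not in the new orbit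
  have horb_old : ∀ i, σ' i ≠ i → (σ i ≠ i ∧ orb σ i = orb σ' i) := by
    intro i hi
    have hiabs := Bset_moved_abs hσ' hi
    have habs : -(m:ℤ) ≤ i ∧ i ≤ (m:ℤ) := abs_le.mp hiabs
    have hin : i ≠ -n ∧ i ≠ n := by constructor <;> (intro hEq; omega)
    constructor
    · intro hEq; exact hi ((hfix i).1 hEq).1
    · ext x
      rw [mem_orb, mem_orb, hsc]
      constructor
      · rintro (h | ⟨h1, h2⟩)
        · exact h
        · rcases h1 with rfl | rfl
          · exact absurd rfl hin.1
          · exact absurd rfl hin.2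
      · exact Or.inl
  -- ntOrbits of σ
  have hnt : ntOrbits σ = insert ({-n, n} : Set ℤ) (ntOrbits σ') := by
    ext O
    constructor
    · intro hO
      obtain ⟨i, hi, rfl⟩ := mem_ntOrbits.mp hO
      rcases eq_or_ne i (-n) with rfl | hi1
      · left
        rw [show orb σ (-n) = orb σ n from orb_eq ?_, horbn]
        rw [hsc]
        exact Or.inr ⟨Or.inl rfl, Or.inr rfl⟩
      rcases eq_or_ne i n with rfl | hi2
      · left; exact horbn
      · have hi' : σ' i ≠ i := by
          intro hfx
          exact hi ((hfix i).2 ⟨hfx, hi1, hi2⟩)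
        right
        rw [(horb_old i hi').2]
        exact orb_mem_ntOrbits hi'
    · rintro (rfl | hO)
      · exact ⟨n, hσn, horbn.symm⟩
      · obtain ⟨i, hi, rfl⟩ := mem_ntOrbits.mp hO
        obtain ⟨h1, h2⟩ := horb_old i hi
        exact mem_ntOrbits.mpr ⟨i, h1, h2.symm⟩
  have hnew_not : ({-n, n} : Set ℤ) ∉ ntOrbits σ' := by
    intro h
    exact not_mem_orbit_of_fixed hσ' h hfn (Or.inr rfl)
  have hnegnew : negSet ({-n, n} : Set ℤ) = {-n, n} := by
    ext x
    rw [mem_negSet]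
    simp only [Set.mem_insert_iff, Set.mem_singleton_iff]
    omega
  -- neg and pos orbits
  have hnegO : negOrbits σ = insert ({-n, n} : Set ℤ) (negOrbits σ') := by
    ext O
    simp only [negOrbits, Set.mem_setOf_eq, Set.sep_setOf, hnt, Set.mem_insert_iff]
    constructor
    · rintro ⟨rfl | h1, h2⟩
      · exact Or.inl rfl
      · exact Or.inr ⟨h1, h2⟩
    · rintro (rfl | ⟨h1, h2⟩)
      · exact ⟨Or.inl rfl, hnegnew⟩
      · exact ⟨Or.inr h1, h2⟩
  have hposO : posOrbits σ = posOrbits σ' := by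
    ext O
    simp only [posOrbits, Set.mem_setOf_eq, Set.sep_setOf, hnt, Set.mem_insert_iff]
    constructor
    · rintro ⟨rfl | h1, h2⟩
      · exact absurd hnegnew h2
      · exact ⟨h1, h2⟩
    · rintro ⟨h1, h2⟩
      exact ⟨Or.inr h1, h2⟩
  have hnew_not_neg : ({-n, n} : Set ℤ) ∉ negOrbits σ' := fun h => hnew_not h.1
  -- counts
  have hcount : negCount σ = negCount σ' + 1 := by
    rw [negCount, negCount, hnegO,
      Set.ncard_insert_of_notMem hnew_not_neg (negOrbits_finite hσ')]
  have hexp : expPlus σ = expPlus σ' := by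
    rw [expPlus, expPlus, hposO, hnegO,
      finsum_mem_insert _ hnew_not_neg (negOrbits_finite hσ')]
    have : (({-n, n} : Set ℤ).ncard / 2 - 1) = 0 := by
      rw [Set.ncard_pair hne]
    rw [this, zero_add]
  rw [phi, phi, hexp, hcount]
  ring

end PhiLemmas


theorem phi_Jplus {m : ℕ} {σ' : Equiv.Perm ℤ} {qp qm : ℂ} (hσ' : σ' ∈ Bset m)
    {j : ℤ} (hj0 : j ≠ 0) (hjm : |j| ≤ (m:ℤ)) :
    phi qp qm (Equiv.swap j ((m:ℤ)+1) * Equiv.swap (-j) (-((m:ℤ)+1)) * σ')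
      = qp * phi qp qm σ' := by
  set n : ℤ := (m:ℤ)+1 with hn
  have habs := abs_le.mp hjm
  have hfn : σ' n = n := Bset_fix_n hσ'
  have hfnn : σ' (-n) = -n := Bset_fix_negn hσ'
  have hjn : j ≠ n := by omega
  have hjnn : j ≠ -n := by omega
  have hmjn : -j ≠ n := by omega
  have hmjnn : -j ≠ -n := by omega
  have hjmj : j ≠ -j := by omega
  have hnnn : n ≠ -n := by omega
  rw [mul_assoc]
  set μ : Equiv.Perm ℤ := Equiv.swap (-j) (-n) * σ' with hμdef
  set σ : Equiv.Perm ℤ := Equiv.swap j n * μ with hσdef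
  have fixμ : ∀ x, μ x = x ↔ σ' x = x ∧ x ≠ -j ∧ x ≠ -n := fun x =>
    insert_fix hfnn hmjnn x
  have scμ : ∀ x y, μ.SameCycle x y ↔ σ'.SameCycle x y ∨
      ((σ'.SameCycle (-j) x ∨ x = -n) ∧ (σ'.SameCycle (-j) y ∨ y = -n)) := fun x y =>
    insert_sameCycle hfnn hmjnn x y
  have hμn : μ n = n := (fixμ n).2 ⟨hfn, Ne.symm hmjn, hnnn⟩
  have fixσraw : ∀ x, σ x = x ↔ μ x = x ∧ x ≠ j ∧ x ≠ n := fun x => insert_fix hμn hjn x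
  have fixσ : ∀ x, σ x = x ↔ σ' x = x ∧ x ≠ j ∧ x ≠ -j ∧ x ≠ n ∧ x ≠ -n := by
    intro x
    rw [fixσraw, fixμ]
    tauto
  have scσraw : ∀ x y, σ.SameCycle x y ↔ μ.SameCycle x y ∨
      ((μ.SameCycle j x ∨ x = n) ∧ (μ.SameCycle j y ∨ y = n)) := fun x y =>
    insert_sameCycle hμn hjn x y
  -- orbit elements are bounded
  have hOmoved : ∀ i x : ℤ, σ' i ≠ i → σ'.SameCycle i x → (x ≠ n ∧ x ≠ -n) := by
    intro i x hi hx
    have h1 : σ' x ≠ x := apply_ne_of_mem_orb hi hx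
    have h2 := abs_le.mp (Bset_moved_abs hσ' h1)
    constructor <;> (intro hEq; omega)
  by_cases hcase : σ'.SameCycle j (-j)
  · -- NEGATIVE case: j and -j in the same (negative) cycle
    have hjne : σ' j ≠ j := by
      intro h
      have := (sc_of_fixed h).1 hcase
      omega
    have hmjne : σ' (-j) ≠ -j := by
      intro h
      have := Bset_apply_neg hσ' j
      rw [h] at this
      exact hjne (by omega)
    set C : ℤ → Prop := fun x => σ'.SameCycle j x ∨ x = -n ∨ x = n with hC
    have hsc2 : ∀ x, σ'.SameCycle (-j) x ↔ σ'.SameCycle j x := fun x =>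
      ⟨fun h => hcase.trans h, fun h => hcase.symm.trans h⟩
    have hscμj : ∀ x, μ.SameCycle j x ↔ (σ'.SameCycle j x ∨ x = -n) := by
      intro x
      rw [scμ, hsc2, hsc2]
      have : σ'.SameCycle (-j) j := hcase.symm
      rw [hsc2] at this
      tauto
    have hscσ : ∀ x y, σ.SameCycle x y ↔ σ'.SameCycle x y ∨ (C x ∧ C y) := by
      intro x y
      rw [scσraw, scμ, hscμj, hscμj, hsc2, hsc2]
      simp only [hC, or_assoc]
      constructor
      · rintro (h | (⟨h1, h2⟩ | ⟨h1, h2⟩))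
        · exact Or.inl h
        · exact Or.inr ⟨h1.imp id Or.inl, h2.imp id Or.inl⟩
        · exact Or.inr ⟨h1, h2⟩
      · rintro (h | ⟨h1, h2⟩)
        · exact Or.inl h
        · exact Or.inr (Or.inr ⟨h1, h2⟩)
    set O : Set ℤ := orb σ' j with hO
    set Onew : Set ℤ := insert n (insert (-n) O) with hOnew
    have hCmem : ∀ x, C x ↔ x ∈ Onew := by
      intro x
      rw [hC, hOnew]
      simp only [Set.mem_insert_iff, mem_orb]
      tauto
    have hnO : (n:ℤ) ∉ O := fun h => (hOmoved j n hjne h).1 rfl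
    have hnnO : (-n:ℤ) ∉ O := fun h => (hOmoved j (-n) hjne h).2 rfl
    have hOfin : O.Finite := orb_finite hσ' hjne
    have hOcard : 2 ≤ O.ncard := orb_ncard_ge_two hσ' hjne
    have hOneg : negSet O = O := by
      rw [hO, negSet_orb hσ']
      exact (orb_eq hcase).symm
    have hOmemneg : O ∈ negOrbits σ' := ⟨orb_mem_ntOrbits hjne, hOneg⟩
    have hCquad : C j ∧ C (-j) ∧ C n ∧ C (-n) :=
      ⟨Or.inl (Equiv.Perm.SameCycle.refl _ _), Or.inl hcase,
        Or.inr (Or.inr rfl), Or.inr (Or.inl rfl)⟩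
    have hσmoves : ∀ i, C i → σ i ≠ i := by
      intro i hCi hEq
      obtain ⟨h1, h2, h3, h4, h5⟩ := (fixσ i).1 hEq
      rcases hCi with hsc | rfl | rfl
      · exact apply_ne_of_mem_orb hjne hsc h1
      · exact h5 rfl
      · exact h4 rfl
    have horbC : ∀ i, C i → orb σ i = Onew := by
      intro i hCi
      ext x
      rw [mem_orb, hscσ, ← hCmem]
      constructor
      · rintro (hsc | ⟨-, hx⟩)
        · rcases hCi with hji | rfl | rfl
          · exact Or.inl (hji.trans hsc)
          · rw [sc_of_fixed hfnn] at hsc; subst hsc; exact hCquad.2.2.2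
          · rw [sc_of_fixed hfn] at hsc; subst hsc; exact hCquad.2.2.1
        · exact hx
      · intro hx
        exact Or.inr ⟨hCi, hx⟩
    have horb_old : ∀ i, ¬ C i → σ' i ≠ i → (σ i ≠ i ∧ orb σ i = orb σ' i) := by
      intro i hCi hi
      constructor
      · intro hEq
        exact hi ((fixσ i).1 hEq).1
      · ext x
        rw [mem_orb, mem_orb, hscσ]
        constructor
        · rintro (h | ⟨h1, -⟩)
          · exact h
          · exact absurd h1 hCi
        · exact Or.inl
    have hmoved_of : ∀ i, ¬ C i → σ i ≠ i → σ' i ≠ i := by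
      intro i hCi hi hEq
      apply hi
      rw [fixσ]
      refine ⟨hEq, ?_, ?_, ?_, ?_⟩
      · rintro rfl; exact hCi hCquad.1
      · rintro rfl; exact hCi hCquad.2.1
      · rintro rfl; exact hCi hCquad.2.2.1
      · rintro rfl; exact hCi hCquad.2.2.2
    have hnt : ntOrbits σ = insert Onew (ntOrbits σ' \ {O}) := by
      ext O'
      constructor
      · intro hO'
        obtain ⟨i, hi, rfl⟩ := mem_ntOrbits.mp hO'
        by_cases hCi : C i
        · left; exact horbC i hCi
        · have hi' := hmoved_of i hCi hi
          right
          refine ⟨mem_ntOrbits.mpr ⟨i, hi', (horb_old i hCi hi').2⟩, ?_⟩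
          rw [(horb_old i hCi hi').2]
          intro hEq
          rw [Set.mem_singleton_iff] at hEq
          apply hCi
          left
          have : i ∈ orb σ' i := mem_orb_self _ _
          rw [hEq] at this
          exact this
      · rintro (rfl | ⟨hO', hne⟩)
        · exact mem_ntOrbits.mpr ⟨j, hσmoves j hCquad.1, (horbC j hCquad.1).symm⟩
        · obtain ⟨i, hi, rfl⟩ := mem_ntOrbits.mp hO'
          have hCi : ¬ C i := by
            rintro (hji | rfl | rfl)
            · apply hne
              rw [Set.mem_singleton_iff, hO, orb_eq hji]
            · exact hi hfnn
            · exact hi hfn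
          exact mem_ntOrbits.mpr ⟨i, (horb_old i hCi hi).1, ((horb_old i hCi hi).2).symm⟩
    have hOnew_not_nt : Onew ∉ ntOrbits σ' := by
      intro h
      exact not_mem_orbit_of_fixed hσ' h hfn (Or.inl rfl)
    have hnOnew : ∀ x, -x ∈ Onew ↔ x ∈ Onew := by
      intro x
      have hxO : x ∈ O ↔ -x ∈ O := by
        conv_lhs => rw [← hOneg]
        rw [mem_negSet]
      simp only [hOnew, Set.mem_insert_iff]
      constructor
      · rintro (h | h | h)
        · right; left; omega
        · left; omega
        · right; right; exact hxO.2 h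
      · rintro (h | h | h)
        · right; left; omega
        · left; omega
        · right; right; exact hxO.1 h
    have hOnewneg : negSet Onew = Onew := by
      ext x
      rw [mem_negSet, hnOnew]
    have hOnew_ne_O : Onew ≠ O := by
      intro h
      rw [← h] at hnO
      exact hnO (Or.inl rfl)
    have hnegO : negOrbits σ = insert Onew (negOrbits σ' \ {O}) := by
      ext O'
      constructor
      · rintro ⟨h1, h2⟩
        rw [hnt] at h1
        rcases h1 with rfl | ⟨h1, h3⟩
        · exact Or.inl rfl
        · exact Or.inr ⟨⟨h1, h2⟩, h3⟩
      · rintro (rfl | ⟨⟨h1, h2⟩, h3⟩)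
        · exact ⟨by rw [hnt]; exact Or.inl rfl, hOnewneg⟩
        · exact ⟨by rw [hnt]; exact Or.inr ⟨h1, h3⟩, h2⟩
    have hposO : posOrbits σ = posOrbits σ' := by
      ext O'
      constructor
      · rintro ⟨h1, h2⟩
        rw [hnt] at h1
        rcases h1 with rfl | ⟨h1, h3⟩
        · exact absurd hOnewneg h2
        · exact ⟨h1, h2⟩
      · rintro ⟨h1, h2⟩
        have hne2 : O' ∉ ({O} : Set (Set ℤ)) := by
          intro hEq
          rw [Set.mem_singleton_iff] at hEq
          subst hEq
          exact h2 hOneg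
        exact ⟨by rw [hnt]; exact Or.inr ⟨h1, hne2⟩, h2⟩
    have hOnew_not_diff : Onew ∉ negOrbits σ' \ {O} := fun h => hOnew_not_nt h.1.1
    have hO_not_diff : O ∉ negOrbits σ' \ {O} := fun h => h.2 rfl
    have hdiff_fin : (negOrbits σ' \ {O}).Finite :=
      (negOrbits_finite hσ').subset Set.diff_subset
    have hinsO : negOrbits σ' = insert O (negOrbits σ' \ {O}) := by
      rw [Set.insert_diff_singleton, Set.insert_eq_of_mem hOmemneg]
    have hcount : negCount σ = negCount σ' := by
      rw [negCount, negCount, hnegO,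
        Set.ncard_insert_of_notMem hOnew_not_diff hdiff_fin]
      conv_rhs => rw [hinsO]
      rw [Set.ncard_insert_of_notMem hO_not_diff hdiff_fin]
    have hOnewcard : Onew.ncard = O.ncard + 2 := by
      rw [hOnew, Set.ncard_insert_of_notMem (by
          rintro (h | h)
          · omega
          · exact hnO h) ((hOfin.insert _)),
        Set.ncard_insert_of_notMem hnnO hOfin]
    have hexp : expPlus σ = expPlus σ' + 1 := by
      rw [expPlus, expPlus, hposO, hnegO,
        finsum_mem_insert _ hOnew_not_diff hdiff_fin]
      conv_rhs => rw [hinsO]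
      rw [finsum_mem_insert _ hO_not_diff hdiff_fin]
      have : Onew.ncard / 2 - 1 = (O.ncard / 2 - 1) + 1 := by
        rw [hOnewcard]; omega
      rw [this]
      omega
    rw [phi, phi, hexp, hcount]
    ring
  · -- POSITIVE case
    have hsymm : ¬ σ'.SameCycle (-j) j := fun h => hcase h.symm
    have hABc : ∀ x, ¬(σ'.SameCycle (-j) x ∧ σ'.SameCycle j x) := by
      rintro x ⟨h1, h2⟩
      exact hcase (h2.trans h1.symm)
    have hscμj : ∀ x, μ.SameCycle j x ↔ σ'.SameCycle j x := by
      intro x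
      rw [scμ]
      constructor
      · rintro (h | ⟨h1 | h1, -⟩)
        · exact h
        · exact absurd h1 hsymm
        · exact absurd h1 hjnn
      · exact Or.inl
    set A : ℤ → Prop := fun x => σ'.SameCycle (-j) x ∨ x = -n with hA
    set B : ℤ → Prop := fun x => σ'.SameCycle j x ∨ x = n with hB
    have hscσ : ∀ x y, σ.SameCycle x y ↔ σ'.SameCycle x y ∨ (A x ∧ A y) ∨ (B x ∧ B y) := by
      intro x y
      rw [scσraw, scμ, hscμj, hscμj]
      simp only [hA, hB]
      exact or_assoc
    have hABx : ∀ x, ¬(A x ∧ B x) := by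
      rintro x ⟨(h1 | h1), (h2 | h2)⟩
      · exact hABc x ⟨h1, h2⟩
      · subst h2; exact hmjn ((h1.eq_of_right hfn))
      · subst h1; exact hjnn ((h2.eq_of_right hfnn))
      · omega
    have hAj : A (-j) := Or.inl (Equiv.Perm.SameCycle.refl _ _)
    have hAn : A (-n) := Or.inr rfl
    have hBj : B j := Or.inl (Equiv.Perm.SameCycle.refl _ _)
    have hBn : B n := Or.inr rfl
    have hσmoves : ∀ i, A i ∨ B i → σ i ≠ i := by
      intro i hABi hEq
      obtain ⟨h1, h2, h3, h4, h5⟩ := (fixσ i).1 hEq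
      rcases hABi with (hsc | rfl) | (hsc | rfl)
      · exact apply_ne_of_mem_orb (fun hf => hsc.symm.eq_of_right hf ▸ h3 <| rfl) hsc h1
      · exact h5 rfl
      · exact apply_ne_of_mem_orb (fun hf => hsc.symm.eq_of_right hf ▸ h2 <| rfl) hsc h1
      · exact h4 rfl
    set OA : Set ℤ := insert (-n) (orb σ' (-j)) with hOA
    set OB : Set ℤ := insert n (orb σ' j) with hOB
    have hAmem : ∀ x, A x ↔ x ∈ OA := by
      intro x
      simp only [hA, hOA, Set.mem_insert_iff, mem_orb]
      tauto
    have hBmem : ∀ x, B x ↔ x ∈ OB := by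
      intro x
      simp only [hB, hOB, Set.mem_insert_iff, mem_orb]
      tauto
    have horbB : ∀ i, B i → orb σ i = OB := by
      intro i hBi
      ext x
      rw [mem_orb, hscσ, ← hBmem]
      constructor
      · rintro (hsc | ⟨hAi, -⟩ | ⟨-, hx⟩)
        · rcases hBi with hji | rfl
          · exact Or.inl (hji.trans hsc)
          · rw [sc_of_fixed hfn] at hsc; exact Or.inr hsc
        · exact absurd ⟨hAi, hBi⟩ (hABx i)
        · exact hx
      · intro hx
        exact Or.inr (Or.inr ⟨hBi, hx⟩)
    have horbA : ∀ i, A i → orb σ i = OA := by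
      intro i hAi
      ext x
      rw [mem_orb, hscσ, ← hAmem]
      constructor
      · rintro (hsc | ⟨-, hx⟩ | ⟨hBi, -⟩)
        · rcases hAi with hmji | rfl
          · exact Or.inl (hmji.trans hsc)
          · rw [sc_of_fixed hfnn] at hsc; exact Or.inr hsc
        · exact hx
        · exact absurd ⟨hAi, hBi⟩ (hABx i)
      · intro hx
        exact Or.inr (Or.inl ⟨hAi, hx⟩)
    have horb_old : ∀ i, ¬ A i → ¬ B i → σ' i ≠ i → (σ i ≠ i ∧ orb σ i = orb σ' i) := by
      intro i hAi hBi hi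
      constructor
      · intro hEq
        exact hi ((fixσ i).1 hEq).1
      · ext x
        rw [mem_orb, mem_orb, hscσ]
        constructor
        · rintro (h | ⟨h1, -⟩ | ⟨h1, -⟩)
          · exact h
          · exact absurd h1 hAi
          · exact absurd h1 hBi
        · exact Or.inl
    have hmoved_of : ∀ i, ¬ A i → ¬ B i → σ i ≠ i → σ' i ≠ i := by
      intro i hAi hBi hi hEq
      apply hi
      rw [fixσ]
      refine ⟨hEq, ?_, ?_, ?_, ?_⟩
      · rintro rfl; exact hBi hBj
      · rintro rfl; exact hAi hAj
      · rintro rfl; exact hBi hBn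
      · rintro rfl; exact hAi hAn
    set P : Set (Set ℤ) := {orb σ' j, orb σ' (-j)} with hP
    have hmemP : ∀ O' : Set ℤ, O' ∈ P ↔ O' = orb σ' j ∨ O' = orb σ' (-j) := by
      intro O'
      simp only [hP, Set.mem_insert_iff, Set.mem_singleton_iff]
    have hnt : ntOrbits σ = insert OB (insert OA (ntOrbits σ' \ P)) := by
      ext O'
      constructor
      · intro hO'
        obtain ⟨i, hi, rfl⟩ := mem_ntOrbits.mp hO'
        by_cases hBi : B i
        · left; exact horbB i hBi
        by_cases hAi : A i
        · right; left; exact horbA i hAi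
        · have hi' := hmoved_of i hAi hBi hi
          right; right
          refine ⟨mem_ntOrbits.mpr ⟨i, hi', (horb_old i hAi hBi hi').2⟩, ?_⟩
          rw [(horb_old i hAi hBi hi').2, hmemP]
          rintro (hEq | hEq)
          · apply hBi
            left
            have : i ∈ orb σ' i := mem_orb_self _ _
            rw [hEq] at this
            exact this
          · apply hAi
            left
            have : i ∈ orb σ' i := mem_orb_self _ _
            rw [hEq] at this
            exact this
      · rintro (rfl | rfl | ⟨hO', hne2⟩)
        · exact mem_ntOrbits.mpr ⟨j, hσmoves j (Or.inr hBj), (horbB j hBj).symm⟩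
        · exact mem_ntOrbits.mpr ⟨-j, hσmoves (-j) (Or.inl hAj), (horbA (-j) hAj).symm⟩
        · obtain ⟨i, hi, rfl⟩ := mem_ntOrbits.mp hO'
          have hBi : ¬ B i := by
            rintro (hji | rfl)
            · exact hne2 ((hmemP _).2 (Or.inl (orb_eq hji).symm))
            · exact hi hfn
          have hAi : ¬ A i := by
            rintro (hmji | rfl)
            · exact hne2 ((hmemP _).2 (Or.inr (orb_eq hmji).symm))
            · exact hi hfnn
          exact mem_ntOrbits.mpr ⟨i, (horb_old i hAi hBi hi).1,
            ((horb_old i hAi hBi hi).2).symm⟩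
    have hOB_not_nt : OB ∉ ntOrbits σ' := fun h =>
      not_mem_orbit_of_fixed hσ' h hfn (Or.inl rfl)
    have hOA_not_nt : OA ∉ ntOrbits σ' := fun h =>
      not_mem_orbit_of_fixed hσ' h hfnn (Or.inl rfl)
    have hOBA : OB ≠ OA := by
      intro h
      have h1 : j ∈ OB := (hBmem j).1 hBj
      rw [h] at h1
      exact hABx j ⟨(hAmem j).2 h1, hBj⟩
    have hswap1 : ∀ x : ℤ, σ'.SameCycle j (-x) ↔ σ'.SameCycle (-j) x := by
      intro x
      have := Bset_sc_neg_iff hσ' (x := j) (y := -x)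
      rw [neg_neg] at this
      exact this.symm
    have hswap2 : ∀ x : ℤ, σ'.SameCycle (-j) (-x) ↔ σ'.SameCycle j x :=
      fun x => Bset_sc_neg_iff hσ' (x := j) (y := x)
    have hnegOB : negSet OB = OA := by
      ext x
      rw [mem_negSet]
      simp only [hOB, hOA, Set.mem_insert_iff, mem_orb, hswap1]
      constructor
      · rintro (h | h)
        · left; omega
        · right; exact h
      · rintro (h | h)
        · left; omega
        · right; exact h
    have hnegOA : negSet OA = OB := by
      ext x
      rw [mem_negSet]
      simp only [hOB, hOA, Set.mem_insert_iff, mem_orb, hswap2]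
      constructor
      · rintro (h | h)
        · left; omega
        · right; exact h
      · rintro (h | h)
        · left; omega
        · right; exact h
    have hOjnotneg : orb σ' j ∉ negOrbits σ' := by
      rintro ⟨-, h2⟩
      rw [negSet_orb hσ'] at h2
      apply hcase
      have : -j ∈ orb σ' (-j) := mem_orb_self _ _
      rw [h2] at this
      exact this
    have hOmjnotneg : orb σ' (-j) ∉ negOrbits σ' := by
      rintro ⟨-, h2⟩
      rw [negSet_orb hσ', neg_neg] at h2
      apply hsymm
      have : j ∈ orb σ' j := mem_orb_self _ _
      rw [h2] at this
      exact this
    have hnegO : negOrbits σ = negOrbits σ' := by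
      ext O'
      constructor
      · rintro ⟨h1, h2⟩
        rw [hnt] at h1
        rcases h1 with rfl | rfl | ⟨h1, -⟩
        · rw [hnegOB] at h2; exact absurd h2.symm hOBA
        · rw [hnegOA] at h2; exact absurd h2 hOBA
        · exact ⟨h1, h2⟩
      · rintro ⟨h1, h2⟩
        refine ⟨?_, h2⟩
        rw [hnt]
        right; right
        refine ⟨h1, ?_⟩
        rw [hmemP]
        rintro (rfl | rfl)
        · exact hOjnotneg ⟨h1, h2⟩
        · exact hOmjnotneg ⟨h1, h2⟩
    have hposO : posOrbits σ = insert OB (insert OA (posOrbits σ' \ P)) := by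
      ext O'
      constructor
      · rintro ⟨h1, h2⟩
        rw [hnt] at h1
        rcases h1 with rfl | rfl | ⟨h1, hne2⟩
        · exact Or.inl rfl
        · exact Or.inr (Or.inl rfl)
        · exact Or.inr (Or.inr ⟨⟨h1, h2⟩, hne2⟩)
      · rintro (rfl | rfl | ⟨⟨h1, h2⟩, hne2⟩)
        · refine ⟨by rw [hnt]; exact Or.inl rfl, ?_⟩
          intro h
          exact hOBA (hnegOB.symm.trans h).symm
        · refine ⟨by rw [hnt]; exact Or.inr (Or.inl rfl), ?_⟩
          intro h
          exact hOBA (hnegOA.symm.trans h)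
        · exact ⟨by rw [hnt]; exact Or.inr (Or.inr ⟨h1, hne2⟩), h2⟩
    have hcount : negCount σ = negCount σ' := by
      rw [negCount, negCount, hnegO]
    have hdiffP_fin : (posOrbits σ' \ P).Finite :=
      (posOrbits_finite hσ').subset Set.diff_subset
    have hOB_not_ins : OB ∉ insert OA (posOrbits σ' \ P) := by
      rintro (h | h)
      · exact hOBA h
      · exact hOB_not_nt h.1.1
    have hOA_not_diff : OA ∉ posOrbits σ' \ P := fun h => hOA_not_nt h.1.1
    have hSp : ∑ᶠ O' ∈ posOrbits σ, (O'.ncard - 1)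
        = (OB.ncard - 1) + ((OA.ncard - 1) + ∑ᶠ O' ∈ posOrbits σ' \ P, (O'.ncard - 1)) := by
      rw [hposO, finsum_mem_insert _ hOB_not_ins (hdiffP_fin.insert _),
        finsum_mem_insert _ hOA_not_diff hdiffP_fin]
    have hexp : expPlus σ = expPlus σ' + 1 := by
      by_cases hfj : σ' j = j
      · have hfmj : σ' (-j) = -j := by rw [Bset_apply_neg hσ', hfj]
        have h1 : orb σ' j ∉ posOrbits σ' := fun h => trivial_orb_not_mem hσ' hfj h.1
        have h2 : orb σ' (-j) ∉ posOrbits σ' := fun h => trivial_orb_not_mem hσ' hfmj h.1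
        have hPdisj : posOrbits σ' \ P = posOrbits σ' := by
          ext O'
          constructor
          · exact fun h => h.1
          · intro h
            refine ⟨h, ?_⟩
            rw [hmemP]
            rintro (rfl | rfl)
            · exact h1 h
            · exact h2 h
        have hcardOB : OB.ncard = 2 := by
          rw [hOB, orb_fixed hfj,
            Set.ncard_insert_of_notMem (by simp only [Set.mem_singleton_iff]; omega)
              (Set.finite_singleton _), Set.ncard_singleton]
        have hcardOA : OA.ncard = 2 := by
          rw [hOA, orb_fixed hfmj,
            Set.ncard_insert_of_notMem (by simp only [Set.mem_singleton_iff]; omega)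
              (Set.finite_singleton _), Set.ncard_singleton]
        rw [expPlus, expPlus, hSp, hPdisj, hcardOB, hcardOA, hnegO]
        omega
      · have hfmj : σ' (-j) ≠ -j := by
          intro h
          apply hfj
          have h2 := Bset_apply_neg hσ' (-j)
          rw [neg_neg, h] at h2
          omega
        have hOjpos : orb σ' j ∈ posOrbits σ' :=
          ⟨orb_mem_ntOrbits hfj, fun h => hOjnotneg ⟨orb_mem_ntOrbits hfj, h⟩⟩
        have hOmjpos : orb σ' (-j) ∈ posOrbits σ' :=
          ⟨orb_mem_ntOrbits hfmj, fun h => hOmjnotneg ⟨orb_mem_ntOrbits hfmj, h⟩⟩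
        have hOjOmj : orb σ' j ≠ orb σ' (-j) := by
          intro h
          apply hcase
          have : -j ∈ orb σ' (-j) := mem_orb_self _ _
          rw [← h] at this
          exact this
        have hinsP : posOrbits σ' = insert (orb σ' j) (insert (orb σ' (-j))
            (posOrbits σ' \ P)) := by
          ext O'
          constructor
          · intro h
            by_cases e1 : O' = orb σ' j
            · exact Or.inl e1
            by_cases e2 : O' = orb σ' (-j)
            · exact Or.inr (Or.inl e2)
            · refine Or.inr (Or.inr ⟨h, ?_⟩)
              rw [hmemP]
              rintro (rfl | rfl)
              · exact e1 rfl
              · exact e2 rfl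
          · rintro (rfl | rfl | ⟨h, -⟩)
            · exact hOjpos
            · exact hOmjpos
            · exact h
        have hOj_not_ins : orb σ' j ∉ insert (orb σ' (-j)) (posOrbits σ' \ P) := by
          rintro (h | h)
          · exact hOjOmj h
          · exact h.2 ((hmemP _).2 (Or.inl rfl))
        have hOmj_not_diff : orb σ' (-j) ∉ posOrbits σ' \ P :=
          fun h => h.2 ((hmemP _).2 (Or.inr rfl))
        have hSp2 : ∑ᶠ O' ∈ posOrbits σ', (O'.ncard - 1)
            = ((orb σ' j).ncard - 1) + (((orb σ' (-j)).ncard - 1)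
              + ∑ᶠ O' ∈ posOrbits σ' \ P, (O'.ncard - 1)) := by
          conv_lhs => rw [hinsP]
          rw [finsum_mem_insert _ hOj_not_ins (hdiffP_fin.insert _),
            finsum_mem_insert _ hOmj_not_diff hdiffP_fin]
        have hnOj : (n:ℤ) ∉ orb σ' j := fun h => (hOmoved j n hfj h).1 rfl
        have hnOmj : (-n:ℤ) ∉ orb σ' (-j) := fun h => (hOmoved (-j) (-n) hfmj h).2 rfl
        have hcardOB : OB.ncard = (orb σ' j).ncard + 1 := by
          rw [hOB, Set.ncard_insert_of_notMem hnOj (orb_finite hσ' hfj)]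
        have hcardOA : OA.ncard = (orb σ' (-j)).ncard + 1 := by
          rw [hOA, Set.ncard_insert_of_notMem hnOmj (orb_finite hσ' hfmj)]
        have hc1 : 2 ≤ (orb σ' j).ncard := orb_ncard_ge_two hσ' hfj
        have hc2 : 2 ≤ (orb σ' (-j)).ncard := orb_ncard_ge_two hσ' hfmj
        rw [expPlus, expPlus, hSp, hSp2, hcardOB, hcardOA, hnegO]
        omega
    rw [phi, phi, hexp, hcount]
    ring

section OpLemmas

variable {α : Type*} [DecidableEq α] {n m : ℕ} {σ τ : Equiv.Perm ℤ}

def Bset' (n : ℕ) : Set (Equiv.Perm ℤ) :=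
  {σ | (∀ i : ℤ, σ (-i) = -σ i) ∧ ∀ i : ℤ, (n : ℤ) < |i| → σ i = i}

example : Bset' = Bset := rfl

theorem Bset_zero' (h : σ ∈ Bset n) : σ 0 = 0 := by
  have := h.1 0; simp at this; omega

theorem Bset_preserves (h : σ ∈ Bset n) :
    ∀ i : ℤ, (i ≠ 0 ∧ |i| ≤ (n : ℤ)) ↔ (σ i ≠ 0 ∧ |σ i| ≤ (n : ℤ)) := by
  intro i
  constructor
  · rintro ⟨h0, hle⟩
    constructor
    · intro hEq
      apply h0
      have := Bset_zero' h
      exact σ.injective (by rw [hEq, this])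
    · by_contra hc
      push_neg at hc
      have h1 : σ (σ i) = σ i := h.2 _ (by omega)
      have h2 : σ i = i := σ.injective h1
      rw [h2] at hc
      omega
  · rintro ⟨h0, hle⟩
    constructor
    · rintro rfl
      exact h0 (Bset_zero' h)
    · by_contra hc
      push_neg at hc
      have h1 : σ i = i := h.2 _ (by omega)
      rw [h1] at hle
      omega

theorem permRestrict_apply (h : σ ∈ Bset n) (x : SIdx n) :
    (permRestrict n σ x : ℤ) = σ (x : ℤ) := by
  rw [permRestrict, dif_pos (Bset_preserves h)]
  rfl

theorem permRestrict_one (n : ℕ) : permRestrict n 1 = 1 := by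
  have h : ∀ i : ℤ, (i ≠ 0 ∧ |i| ≤ (n:ℤ)) ↔
      ((1 : Equiv.Perm ℤ) i ≠ 0 ∧ |(1 : Equiv.Perm ℤ) i| ≤ (n:ℤ)) := fun i => Iff.rfl
  rw [permRestrict, dif_pos h]
  rfl

theorem act_single (σ : Equiv.Perm ℤ) (v : SIdx n → α) (c : ℂ) :
    act α n σ (Finsupp.single v c) = Finsupp.single (v ∘ permRestrict n σ) c := by
  rw [act, Finsupp.lmapDomain_apply, Finsupp.mapDomain_single]

theorem act_one : act α n (1 : Equiv.Perm ℤ) = LinearMap.id := by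
  refine Finsupp.lhom_ext fun v c => ?_
  rw [act_single, permRestrict_one]
  rfl

theorem Bset_mul' (h1 : σ ∈ Bset n) (h2 : τ ∈ Bset n) : σ * τ ∈ Bset n := by
  constructor
  · intro i
    simp only [Equiv.Perm.mul_apply, h2.1 i, h1.1 (τ i)]
  · intro i hi
    simp only [Equiv.Perm.mul_apply, h2.2 i hi, h1.2 i hi]

theorem act_comp (hσ : σ ∈ Bset n) (hτ : τ ∈ Bset n) :
    act α n σ ∘ₗ act α n τ = act α n (τ * σ) := by
  refine Finsupp.lhom_ext fun v c => ?_
  rw [LinearMap.comp_apply, act_single, act_single, act_single]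
  congr 1
  funext i
  simp only [Function.comp_apply]
  congr 1
  apply Subtype.ext
  rw [permRestrict_apply hτ, permRestrict_apply hσ, permRestrict_apply (Bset_mul' hτ hσ)]
  rfl

theorem Bset_finite (n : ℕ) : (Bset n).Finite := by
  apply Set.Finite.of_finite_image (f := permRestrict n) (Set.toFinite _)
  intro σ1 h1 σ2 h2 hEq
  ext i
  rcases eq_or_ne i 0 with rfl | h0
  · rw [Bset_zero' h1, Bset_zero' h2]
  rcases le_or_gt |i| (n : ℤ) with hle | hlt
  · have e1 := permRestrict_apply h1 ⟨i, h0, hle⟩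
    have e2 := permRestrict_apply h2 ⟨i, h0, hle⟩
    rw [hEq] at e1
    rw [← e1, e2]
  · rw [h1.2 i hlt, h2.2 i hlt]

theorem Pop_eq_sum (α : Type*) [DecidableEq α] (n : ℕ) (qp qm : ℂ) :
    Pop α n qp qm = ∑ σ ∈ (Bset_finite n).toFinset, phi qp qm σ • act α n σ := by
  rw [Pop, finsum_mem_eq_finite_toFinset_sum _ (Bset_finite n)]

end OpLemmas


section EmbedLemmas

variable {α : Type*} [DecidableEq α] {n m : ℕ}

theorem embedMid_single (T : Ksp α n →ₗ[ℂ] Ksp α n) (v : SIdx (n+1) → α) (c : ℂ) :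
    embedMid α n T (Finsupp.single v c)
      = c • Finsupp.mapDomain
          (fun w : SIdx n → α => upFn w (v (negEnd n)) (v (posEnd n)))
          (T (Finsupp.single (downFn v) 1)) := by
  rw [embedMid, Finsupp.lsum_single, LinearMap.toSpanSingleton_apply]

theorem embedMid_zero : embedMid α n (0 : Ksp α n →ₗ[ℂ] Ksp α n) = 0 := by
  refine Finsupp.lhom_ext fun v c => ?_
  rw [embedMid_single]
  simp

theorem embedMid_add (T₁ T₂ : Ksp α n →ₗ[ℂ] Ksp α n) :
    embedMid α n (T₁ + T₂) = embedMid α n T₁ + embedMid α n T₂ := by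
  refine Finsupp.lhom_ext fun v c => ?_
  simp only [LinearMap.add_apply, embedMid_single, LinearMap.add_apply,
    Finsupp.mapDomain_add, smul_add]

theorem embedMid_smul (c : ℂ) (T : Ksp α n →ₗ[ℂ] Ksp α n) :
    embedMid α n (c • T) = c • embedMid α n T := by
  refine Finsupp.lhom_ext fun v b => ?_
  simp only [LinearMap.smul_apply, embedMid_single, Finsupp.mapDomain_smul,
    smul_comm b c]

theorem embedMid_sum {ι : Type*} (s : Finset ι) (T : ι → (Ksp α n →ₗ[ℂ] Ksp α n)) :
    embedMid α n (∑ i ∈ s, T i) = ∑ i ∈ s, embedMid α n (T i) := by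
  classical
  induction s using Finset.induction_on with
  | empty => simpa using embedMid_zero
  | insert _ _ hnotmem ih =>
    rw [Finset.sum_insert hnotmem, Finset.sum_insert hnotmem, embedMid_add, ih]

theorem upFn_downFn {σ' : Equiv.Perm ℤ} (hσ' : σ' ∈ Bset m) (v : SIdx (m+1) → α) :
    upFn (downFn v ∘ permRestrict m σ') (v (negEnd m)) (v (posEnd m))
      = v ∘ (permRestrict (m+1) σ') := by
  have hσ1 : σ' ∈ Bset (m+1) := Bset_mono (Nat.le_succ m) hσ'
  funext i
  simp only [Function.comp_apply, upFn]
  by_cases h : (i : ℤ) ≠ 0 ∧ |(i : ℤ)| ≤ (m : ℤ)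
  · rw [dif_pos h]
    simp only [Function.comp_apply, downFn]
    congr 1
    apply Subtype.ext
    show ((permRestrict m σ' ⟨(i : ℤ), h⟩ : SIdx m) : ℤ)
      = ((permRestrict (m+1) σ' i : SIdx (m+1)) : ℤ)
    rw [permRestrict_apply hσ' ⟨(i : ℤ), h⟩, permRestrict_apply hσ1 i]
  · rw [dif_neg h]
    push_neg at h
    have hi0 : (i : ℤ) ≠ 0 := i.2.1
    have hile : |(i : ℤ)| ≤ (m : ℤ) + 1 := by
      have := i.2.2
      push_cast at this
      exact this
    have habs := abs_le.mp hile
    have h2 := h hi0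
    have hival : (i : ℤ) = (m : ℤ) + 1 ∨ (i : ℤ) = -((m : ℤ) + 1) := by
      rcases lt_or_ge (i : ℤ) 0 with hlt | hge
      · right
        have : |(i : ℤ)| = -(i : ℤ) := abs_of_neg hlt
        omega
      · left
        have : |(i : ℤ)| = (i : ℤ) := abs_of_nonneg hge
        omega
    rcases hival with hival | hival
    · rw [if_neg (by omega)]
      congr 1
      apply Subtype.ext
      show ((posEnd m : SIdx (m+1)) : ℤ) = ((permRestrict (m+1) σ' i : SIdx (m+1)) : ℤ)
      rw [permRestrict_apply hσ1 i, hival, Bset_fix_n hσ']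
      rfl
    · rw [if_pos (by omega)]
      congr 1
      apply Subtype.ext
      show ((negEnd m : SIdx (m+1)) : ℤ) = ((permRestrict (m+1) σ' i : SIdx (m+1)) : ℤ)
      rw [permRestrict_apply hσ1 i, hival, Bset_fix_negn hσ']
      rfl

theorem embedMid_act {σ' : Equiv.Perm ℤ} (hσ' : σ' ∈ Bset m) :
    embedMid α m (act α m σ') = act α (m+1) σ' := by
  refine Finsupp.lhom_ext fun v c => ?_
  rw [embedMid_single, act_single, act_single, Finsupp.mapDomain_single,
    upFn_downFn hσ' v, Finsupp.smul_single, smul_eq_mul, mul_one]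

end EmbedLemmas


end Aux

section Main

open Equiv Equiv.Perm

theorem one_mem_Bset (n : ℕ) : (1 : Equiv.Perm ℤ) ∈ Bset n :=
  ⟨fun _ => rfl, fun _ _ => rfl⟩

theorem Jm_mem (n : ℕ) : Equiv.swap (-(n:ℤ)) (n:ℤ) ∈ Bset n := by
  constructor
  · intro i
    rw [Equiv.swap_apply_def, Equiv.swap_apply_def]
    split_ifs <;> omega
  · intro i hi
    have h2 := lt_abs.mp hi
    rw [Equiv.swap_apply_def]
    split_ifs <;> omega

theorem Jp_mem {m : ℕ} {j : ℤ} (hj0 : j ≠ 0) (hjm : |j| ≤ (m:ℤ)) :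
    Equiv.swap j ((m:ℤ)+1) * Equiv.swap (-j) (-((m:ℤ)+1)) ∈ Bset (m+1) := by
  have habs := abs_le.mp hjm
  constructor
  · intro i
    simp only [Equiv.Perm.mul_apply, Equiv.swap_apply_def]
    split_ifs <;> omega
  · intro i hi
    have hc : ((m+1 : ℕ) : ℤ) = (m:ℤ)+1 := by push_cast; ring
    rw [hc] at hi
    have h2 := lt_abs.mp hi
    simp only [Equiv.Perm.mul_apply, Equiv.swap_apply_def]
    split_ifs <;> omega

theorem swap_commute {a b c d : ℤ} (hac : a ≠ c) (had : a ≠ d) (hbc : b ≠ c)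
    (hbd : b ≠ d) : Equiv.swap a b * Equiv.swap c d = Equiv.swap c d * Equiv.swap a b := by
  ext i
  simp only [Equiv.Perm.mul_apply, Equiv.swap_apply_def]
  split_ifs <;> omega

theorem Jp_invol {m : ℕ} {j : ℤ} (hj0 : j ≠ 0) (hjm : |j| ≤ (m:ℤ)) :
    (Equiv.swap j ((m:ℤ)+1) * Equiv.swap (-j) (-((m:ℤ)+1)))
      * (Equiv.swap j ((m:ℤ)+1) * Equiv.swap (-j) (-((m:ℤ)+1))) = 1 := by
  have habs := abs_le.mp hjm
  set s1 := Equiv.swap j ((m:ℤ)+1) with hs1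
  set s2 := Equiv.swap (-j) (-((m:ℤ)+1)) with hs2
  have hcomm : s2 * s1 = s1 * s2 := by
    rw [hs1, hs2]
    exact swap_commute (by omega) (by omega) (by omega) (by omega)
  calc s1 * s2 * (s1 * s2) = s1 * (s2 * s1) * s2 := by group
    _ = s1 * (s1 * s2) * s2 := by rw [hcomm]
    _ = (s1 * s1) * (s2 * s2) := by group
    _ = 1 := by rw [hs1, hs2, Equiv.swap_mul_self, Equiv.swap_mul_self, one_mul]

/-- The coset representatives. -/
def efam (n : ℤ) (k : ℤ) : Equiv.Perm ℤ :=
  if k = n then 1 else if k = -n then Equiv.swap (-n) n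
  else Equiv.swap k n * Equiv.swap (-k) (-n)

section efam

variable {m : ℕ} {k : ℤ}

theorem efam_mem (hk0 : k ≠ 0) (hkn : |k| ≤ (m:ℤ)+1) :
    efam ((m:ℤ)+1) k ∈ Bset (m+1) := by
  have habs := abs_le.mp hkn
  have hc : ((m+1 : ℕ) : ℤ) = (m:ℤ)+1 := by push_cast; ring
  rw [efam]
  split_ifs with h1 h2
  · exact one_mem_Bset _
  · have := Jm_mem (m+1)
    rw [hc] at this
    exact this
  · exact Jp_mem hk0 (abs_le.mpr (by omega))

theorem efam_mul_self (hk0 : k ≠ 0) (hkn : |k| ≤ (m:ℤ)+1) :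
    efam ((m:ℤ)+1) k * efam ((m:ℤ)+1) k = 1 := by
  have habs := abs_le.mp hkn
  rw [efam]
  split_ifs with h1 h2
  · exact one_mul 1
  · exact Equiv.swap_mul_self _ _
  · exact Jp_invol hk0 (abs_le.mpr (by omega))

theorem efam_apply_n (hk0 : k ≠ 0) (hkn : |k| ≤ (m:ℤ)+1) :
    efam ((m:ℤ)+1) k ((m:ℤ)+1) = k := by
  have habs := abs_le.mp hkn
  rw [efam]
  split_ifs with h1 h2
  · rw [h1]; rfl
  · rw [h2]; exact Equiv.swap_apply_right _ _
  · have e1 : Equiv.swap (-k) (-((m:ℤ)+1)) ((m:ℤ)+1) = (m:ℤ)+1 :=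
      Equiv.swap_apply_of_ne_of_ne (by omega) (by omega)
    rw [Equiv.Perm.mul_apply, e1, Equiv.swap_apply_right]

theorem efam_apply_self (hk0 : k ≠ 0) (hkn : |k| ≤ (m:ℤ)+1) :
    efam ((m:ℤ)+1) k k = (m:ℤ)+1 := by
  have habs := abs_le.mp hkn
  rw [efam]
  split_ifs with h1 h2
  · rw [h1]; rfl
  · conv_lhs => rw [h2]
    rw [Equiv.swap_apply_left]
  · have e1 : Equiv.swap (-k) (-((m:ℤ)+1)) k = k :=
      Equiv.swap_apply_of_ne_of_ne (by omega) (by omega)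
    rw [Equiv.Perm.mul_apply, e1, Equiv.swap_apply_left]

end efam

theorem Bset_fix_top {m : ℕ} {σ : Equiv.Perm ℤ} (hσ : σ ∈ Bset (m+1))
    (hfix : σ ((m:ℤ)+1) = (m:ℤ)+1) : σ ∈ Bset m := by
  have hc : ((m+1 : ℕ) : ℤ) = (m:ℤ)+1 := by push_cast; ring
  refine ⟨hσ.1, ?_⟩
  intro i hi
  by_cases h2 : ((m:ℤ)+1) < |i|
  · exact hσ.2 i (by rw [hc]; exact h2)
  · push_neg at h2
    have h4 := abs_le.mp h2
    have h5 := lt_abs.mp hi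
    have : i = (m:ℤ)+1 ∨ i = -((m:ℤ)+1) := by omega
    rcases this with rfl | rfl
    · exact hfix
    · have := hσ.1 ((m:ℤ)+1)
      rw [hfix] at this
      exact this

theorem sum_comp_lin {α : Type*} [DecidableEq α] {n : ℕ} {ι : Type*} (s : Finset ι)
    (f : ι → (Ksp α n →ₗ[ℂ] Ksp α n)) (g : Ksp α n →ₗ[ℂ] Ksp α n) :
    (∑ i ∈ s, f i) ∘ₗ g = ∑ i ∈ s, (f i ∘ₗ g) := by
  apply LinearMap.ext
  intro x
  simp [LinearMap.sum_apply]

theorem lin_comp_sum {α : Type*} [DecidableEq α] {n : ℕ} {ι : Type*} (s : Finset ι)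
    (g : Ksp α n →ₗ[ℂ] Ksp α n) (f : ι → (Ksp α n →ₗ[ℂ] Ksp α n)) :
    g ∘ₗ (∑ i ∈ s, f i) = ∑ i ∈ s, (g ∘ₗ f i) := by
  apply LinearMap.ext
  intro x
  simp [LinearMap.sum_apply]

end Main

/-- the decomposition P^{(n)} = (id ⊗ P^{(n−1)} ⊗ id) ∘ R^{(n)} of the
type-B symmetrization operator, for every n = m+1 ≥ 1. -/
theorem symmetrizer_decomposition (α : Type*) [DecidableEq α] (qp qm : ℂ) (m : ℕ) :
    Pop α (m + 1) qp qm
      = (embedMid α m (Pop α m qp qm)) ∘ₗ (Rop α (m + 1) qp qm) := by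
  classical
  set nz : ℤ := (m:ℤ)+1 with hnz
  have hc : ((m+1 : ℕ) : ℤ) = nz := by rw [hnz]; push_cast; ring
  set BF' : Finset (Equiv.Perm ℤ) := (Bset_finite m).toFinset with hBF'
  set K : Finset ℤ := (Finset.Icc (-nz) nz).erase 0 with hK
  set Jf : Finset ℤ := (Finset.Icc (-nz+1) (nz-1)).erase 0 with hJf
  have hKmem : ∀ k, k ∈ K ↔ (k ≠ 0 ∧ |k| ≤ nz) := by
    intro k
    rw [hK, Finset.mem_erase, Finset.mem_Icc, abs_le]
  have hJfmem : ∀ k, k ∈ Jf ↔ (k ≠ 0 ∧ |k| ≤ (m:ℤ)) := by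
    intro k
    rw [hJf, Finset.mem_erase, Finset.mem_Icc, abs_le]
    omega
  have hmemBF' : ∀ σ', σ' ∈ BF' ↔ σ' ∈ Bset m := fun σ' => Set.Finite.mem_toFinset _
  have hmem1 : ∀ σ', σ' ∈ BF' → σ' ∈ Bset (m+1) := fun σ' h =>
    Bset_mono (Nat.le_succ m) ((hmemBF' σ').1 h)
  -- the partition of B(m+1)
  have hval : ∀ k ∈ K, ∀ σ' ∈ BF', (efam nz k * σ') nz = k := by
    intro k hk σ' hσ'
    obtain ⟨hk0, hkn⟩ := (hKmem k).1 hk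
    rw [Equiv.Perm.mul_apply, hnz, Bset_fix_n ((hmemBF' σ').1 hσ'), ← hnz]
    rw [hnz] at hkn ⊢
    exact efam_apply_n hk0 hkn
  have hBFeq : (Bset_finite (m+1)).toFinset
      = K.biUnion (fun k => BF'.image (fun σ' => efam nz k * σ')) := by
    ext σ
    rw [Set.Finite.mem_toFinset, Finset.mem_biUnion]
    constructor
    · intro hσ
      have hpres := (Bset_preserves hσ nz).1
        ⟨by omega, by rw [abs_of_nonneg (by omega : (0:ℤ) ≤ nz)]; omega⟩
      rw [hc] at hpres
      have hkK : σ nz ∈ K := (hKmem _).2 hpres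
      refine ⟨σ nz, hkK, ?_⟩
      rw [Finset.mem_image]
      refine ⟨efam nz (σ nz) * σ, ?_, ?_⟩
      · rw [hmemBF']
        apply Bset_fix_top (m := m)
        · exact Bset_mul' (by rw [hnz] at hpres ⊢; exact efam_mem hpres.1 hpres.2) hσ
        · rw [Equiv.Perm.mul_apply, ← hnz]
          rw [hnz] at hpres ⊢
          exact efam_apply_self hpres.1 hpres.2
      · rw [← mul_assoc]
        rw [hnz] at hpres ⊢
        rw [efam_mul_self hpres.1 hpres.2, one_mul]
    · rintro ⟨k, hk, hσ⟩
      rw [Finset.mem_image] at hσ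
      obtain ⟨σ', hσ', rfl⟩ := hσ
      obtain ⟨hk0, hkn⟩ := (hKmem k).1 hk
      rw [hnz] at hkn
      exact Bset_mul' (efam_mem hk0 hkn) (hmem1 σ' hσ')
  have hdisj : (↑K : Set ℤ).PairwiseDisjoint
      (fun k => BF'.image (fun σ' => efam nz k * σ')) := by
    intro k1 hk1 k2 hk2 hne
    simp only [Function.onFun]
    rw [Finset.disjoint_left]
    intro σ h1 h2
    rw [Finset.mem_image] at h1 h2
    obtain ⟨σ1, hσ1, he1⟩ := h1
    obtain ⟨σ2, hσ2, he2⟩ := h2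
    apply hne
    have v1 := hval k1 (by simpa using hk1) σ1 hσ1
    have v2 := hval k2 (by simpa using hk2) σ2 hσ2
    rw [he1] at v1
    rw [he2] at v2
    rw [← v1, ← v2]
  have hKsplit : K = insert nz (insert (-nz) Jf) := by
    ext k
    rw [hKmem k, Finset.mem_insert, Finset.mem_insert, hJfmem k]
    constructor
    · rintro ⟨h0, hle⟩
      have := abs_le.mp hle
      by_cases e1 : k = nz
      · exact Or.inl e1
      by_cases e2 : k = -nz
      · exact Or.inr (Or.inl e2)
      · exact Or.inr (Or.inr ⟨h0, abs_le.mpr (by omega)⟩)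
    · rintro (rfl | rfl | ⟨h0, hle⟩)
      · exact ⟨by omega, by rw [abs_of_nonneg (by omega)]⟩
      · refine ⟨by omega, ?_⟩
        rw [abs_neg, abs_of_nonneg (by omega)]
      · have := abs_le.mp hle
        exact ⟨h0, abs_le.mpr (by omega)⟩
  have hn_not : nz ∉ insert (-nz) Jf := by
    rw [Finset.mem_insert, hJfmem]
    push_neg
    refine ⟨by omega, fun _ => ?_⟩
    rw [abs_of_nonneg (by omega : (0:ℤ) ≤ nz)]
    omega
  have hmn_not : -nz ∉ Jf := by
    rw [hJfmem]
    push_neg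
    intro _
    rw [abs_neg, abs_of_nonneg (by omega : (0:ℤ) ≤ nz)]
    omega
  -- the three membership facts for act_comp
  have hJmB : Equiv.swap (-nz) nz ∈ Bset (m+1) := by
    have := Jm_mem (m+1)
    rw [hc] at this
    exact this
  -- LHS
  rw [Pop_eq_sum, hBFeq, Finset.sum_biUnion hdisj]
  have himg : ∀ k ∈ K,
      (∑ σ ∈ BF'.image (fun σ' => efam nz k * σ'), phi qp qm σ • act α (m+1) σ)
        = ∑ σ' ∈ BF', phi qp qm (efam nz k * σ') • act α (m+1) (efam nz k * σ') :=
    fun k _ => Finset.sum_image (fun a _ b _ h => mul_left_cancel h)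
  rw [Finset.sum_congr rfl himg, hKsplit, Finset.sum_insert hn_not,
    Finset.sum_insert hmn_not]
  -- chunk 1
  have hch1 : (∑ σ' ∈ BF', phi qp qm (efam nz nz * σ') • act α (m+1) (efam nz nz * σ'))
      = ∑ σ' ∈ BF', phi qp qm σ' • act α (m+1) σ' := by
    apply Finset.sum_congr rfl
    intro σ' _
    rw [show efam nz nz = 1 from if_pos rfl, one_mul]
  -- chunk 2
  have hch2 : (∑ σ' ∈ BF',
        phi qp qm (efam nz (-nz) * σ') • act α (m+1) (efam nz (-nz) * σ'))
      = ∑ σ' ∈ BF', (qm * phi qp qm σ')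
          • (act α (m+1) σ' ∘ₗ act α (m+1) (Equiv.swap (-nz) nz)) := by
    apply Finset.sum_congr rfl
    intro σ' hσ'
    have hef : efam nz (-nz) = Equiv.swap (-nz) nz := by
      rw [efam, if_neg (by omega), if_pos rfl]
    rw [hef, act_comp (hmem1 σ' hσ') hJmB]
    congr 1
    rw [hnz]
    exact phi_Jminus ((hmemBF' σ').1 hσ')
  -- chunk 3
  have hch3 : (∑ j ∈ Jf, ∑ σ' ∈ BF',
        phi qp qm (efam nz j * σ') • act α (m+1) (efam nz j * σ'))
      = ∑ j ∈ Jf, ∑ σ' ∈ BF', (qp * phi qp qm σ')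
          • (act α (m+1) σ' ∘ₗ act α (m+1) (Equiv.swap j nz * Equiv.swap (-j) (-nz))) := by
    apply Finset.sum_congr rfl
    intro j hj
    obtain ⟨hj0, hjm⟩ := (hJfmem j).1 hj
    apply Finset.sum_congr rfl
    intro σ' hσ'
    have hef : efam nz j = Equiv.swap j nz * Equiv.swap (-j) (-nz) := by
      have h1 : j ≠ nz := by
        have := abs_le.mp hjm
        omega
      have h2 : j ≠ -nz := by
        have := abs_le.mp hjm
        omega
      rw [efam, if_neg h1, if_neg h2]
    have hJpB : Equiv.swap j nz * Equiv.swap (-j) (-nz) ∈ Bset (m+1) := by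
      rw [hnz]
      exact Jp_mem hj0 hjm
    rw [hef, act_comp (hmem1 σ' hσ') hJpB]
    congr 1
    rw [hnz]
    exact phi_Jplus ((hmemBF' σ').1 hσ') hj0 hjm
  rw [hch1, hch2, hch3]
  -- RHS
  rw [Pop_eq_sum α m, embedMid_sum]
  have hRe : ∀ σ' ∈ BF', embedMid α m (phi qp qm σ' • act α m σ')
      = phi qp qm σ' • act α (m+1) σ' := by
    intro σ' hσ'
    rw [embedMid_smul, embedMid_act ((hmemBF' σ').1 hσ')]
  rw [Finset.sum_congr rfl hRe, sum_comp_lin]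
  have hRop : Rop α (m+1) qp qm = LinearMap.id
      + qm • act α (m+1) (Equiv.swap (-nz) nz)
      + qp • ∑ j ∈ Jf, act α (m+1) (Equiv.swap j nz * Equiv.swap (-j) (-nz)) := by
    rw [Rop, hc, hJf]
  have hRcomp : ∀ σ' ∈ BF',
      (phi qp qm σ' • act α (m+1) σ') ∘ₗ Rop α (m+1) qp qm
        = phi qp qm σ' • act α (m+1) σ'
          + (qm * phi qp qm σ')
              • (act α (m+1) σ' ∘ₗ act α (m+1) (Equiv.swap (-nz) nz))
          + ∑ j ∈ Jf, (qp * phi qp qm σ')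
              • (act α (m+1) σ' ∘ₗ act α (m+1)
                  (Equiv.swap j nz * Equiv.swap (-j) (-nz))) := by
    intro σ' _
    rw [hRop, LinearMap.smul_comp, LinearMap.comp_add, LinearMap.comp_add,
      LinearMap.comp_id, LinearMap.comp_smul, LinearMap.comp_smul, lin_comp_sum,
      smul_add, smul_add, smul_smul, smul_smul, mul_comm (phi qp qm σ') qm,
      mul_comm (phi qp qm σ') qp, Finset.smul_sum]
  rw [Finset.sum_congr rfl hRcomp, Finset.sum_add_distrib, Finset.sum_add_distrib,
    Finset.sum_comm (s := Jf) (t := BF')]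
  abel

end TypeB
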